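/- Let A and B be small categories, i : A → B a fully faithful functor, C a category with all small colimits, and F : B → C a functor. There is a canonical natural isomorphism F ∘ i ≅ Lan_{y_B}(F) ∘ i_! ∘ y_A (arising from the natural isomorphisms i_! ∘ y_A ≅ y_B ∘ i and Lan_{y_B}(F) ∘ y_B ≅ F, the latter holding because y_B is fully faithful). Moreover, the natural transformation Lan_{y_A}(F ∘ i) → Lan_{y_B}(F) ∘ i_! induced by this isomorphism via the universal property of the left Kan extension along y_A is a natural isomorphism. -/

import Mathlib

open CategoryTheory CategoryTheory.Limits

universe v w u v₁ u₁ u₂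

namespace CategoryTheory.Presheaf

/-- `F ⋙ yoneda` is naturally isomorphic to `yoneda ⋙ F.op.lan` (the pre-2025 Mathlib
definition, restored verbatim in its data). -/
noncomputable def compYonedaIsoYonedaCompLan {C : Type u₁} [Category.{v₁} C] {D : Type u₂}
    [Category.{v₁} D] (F : C ⥤ D) [∀ (P : Cᵒᵖ ⥤ Type v₁), F.op.HasLeftKanExtension P] :
    F ⋙ yoneda ≅ yoneda ⋙ F.op.lan :=
  NatIso.ofComponents (fun X => Functor.leftKanExtensionUnique _
    (yonedaMap F X) (F.op.lan.obj _) (F.op.lanUnit.app (yoneda.obj X)))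
    (fun {X Y} f => by
      apply yonedaEquiv.injective
      have eq₁ := ConcreteCategory.congr_hom
        ((yoneda.obj (F.obj Y)).descOfIsLeftKanExtension_fac_app
        (yonedaMap F Y) (F.op.lan.obj (yoneda.obj Y))
          (F.op.lanUnit.app (yoneda.obj Y)) (Opposite.op X)) f
      have eq₂ := ConcreteCategory.congr_hom
        (((yoneda.obj (F.obj X)).descOfIsLeftKanExtension_fac_app
        (yonedaMap F X) (F.op.lan.obj (yoneda.obj X))
          (F.op.lanUnit.app (yoneda.obj X))) (Opposite.op X)) (𝟙 X)
      have eq₃ := ConcreteCategory.congr_hom (congr_app (F.op.lanUnit.naturality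
        (yoneda.map f)) (Opposite.op X)) (𝟙 X)
      dsimp [yonedaMap, yonedaEquiv, Functor.leftKanExtensionUnique] at eq₁ eq₂ eq₃ ⊢
      simp only [Functor.map_id] at eq₂
      simp only [Category.id_comp] at eq₃
      dsimp only [Functor.leftKanExtensionUniqueOfIso, Iso.refl_hom]
      simp only [Category.id_comp]
      rw [eq₁, eq₂, eq₃])

end CategoryTheory.Presheaf

namespace Statement3Aux

open Opposite

variable {B : Type u} [SmallCategory B] {C : Type w} [Category.{v} C]

section

variable (F : B ⥤ C)

/-- The "restricted yoneda with ULift" presheaf `b ↦ ULift (F.obj b ⟶ E)`. -/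
@[simps]
def Rfun (E : C) : Bᵒᵖ ⥤ Type (max u v) where
  obj b := ULift.{u} (F.obj b.unop ⟶ E)
  map {b b'} f := TypeCat.ofHom (fun g => ULift.up (F.map f.unop ≫ g.down))
  map_id b := by ext g; dsimp; simp
  map_comp f g := by ext x; dsimp; simp

/-- The functor postcomposing with `uliftFunctor`. -/
abbrev Ufun (B : Type u) [SmallCategory B] (C : Type w) [Category.{v} C] :
    (Bᵒᵖ ⥤ Type u) ⥤ (Bᵒᵖ ⥤ Type (max u v)) :=
  (Functor.whiskeringRight Bᵒᵖ (Type u) (Type (max u v))).obj uliftFunctor.{v, u}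

variable (L : (Bᵒᵖ ⥤ Type u) ⥤ C) (α : F ⟶ yoneda ⋙ L)

/-- The comparison morphism `Ufun.obj P ⟶ Rfun F E` induced by a morphism `L.obj P ⟶ E`. -/
@[simps]
def umor (P : Bᵒᵖ ⥤ Type u) (E : C) (m : L.obj P ⟶ E) :
    (Ufun B C).obj P ⟶ Rfun F E where
  app b := TypeCat.ofHom (fun x => ULift.up (α.app b.unop ≫ L.map (yonedaEquiv.symm x.down) ≫ m))
  naturality {b b'} f := by
    ext x
    have hα : F.map f.unop ≫ α.app b.unop = α.app b'.unop ≫ L.map (yoneda.map f.unop) :=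
      α.naturality f.unop
    apply ULift.ext
    change α.app b'.unop ≫ L.map (yonedaEquiv.symm (P.map f (ULift.down x))) ≫ m =
      F.map f.unop ≫ α.app b.unop ≫ L.map (yonedaEquiv.symm (ULift.down x)) ≫ m
    rw [yonedaEquiv_symm_map, L.map_comp, ← Category.assoc, ← Category.assoc, ← hα]
    dsimp
    rw [Category.assoc, Category.assoc]

variable {J : Type u} [SmallCategory J] {D : J ⥤ (Bᵒᵖ ⥤ Type u)} (c : Cocone D)
  (s : Cocone (D ⋙ L))

/-- The cocone over `D ⋙ Ufun` with point `Rfun F s.pt` built from `s`. -/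
@[simps]
def scocone : Cocone (D ⋙ Ufun B C) where
  pt := Rfun F s.pt
  ι :=
    { app := fun j => umor F L α (D.obj j) s.pt (s.ι.app j)
      naturality := fun {j j'} φ => by
        ext b x
        have hs : L.map (D.map φ) ≫ s.ι.app j' = s.ι.app j := s.w φ
        have hy : yonedaEquiv.symm ((D.map φ).app b x.down) =
            yonedaEquiv.symm x.down ≫ D.map φ := by
          apply yonedaEquiv.injective
          rw [yonedaEquiv_comp]
          simp
        apply ULift.ext
        change α.app b.unop ≫ L.map (yonedaEquiv.symm ((D.map φ).app b x.down)) ≫ s.ι.app j' =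
          α.app b.unop ≫ L.map (yonedaEquiv.symm x.down) ≫ s.ι.app j
        rw [hy, L.map_comp, Category.assoc, hs] }

/-- The cocone over `CostructuredArrow.proj yoneda c.pt ⋙ F` built from a
morphism `ud : Ufun.obj c.pt ⟶ Rfun F E`. -/
@[simps]
def tcone (E : C) (ud : (Ufun B C).obj c.pt ⟶ Rfun F E) :
    Cocone (CostructuredArrow.proj yoneda c.pt ⋙ F) where
  pt := E
  ι :=
    { app := fun g => ((ud.app (op g.left)) (ULift.up (yonedaEquiv g.hom))).down
      naturality := fun {g₁ g₂} φ => by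
        have h' : ud.app (op g₁.left) (ULift.up (c.pt.map φ.left.op (yonedaEquiv g₂.hom))) =
            ULift.up (F.map φ.left ≫ (ud.app (op g₂.left) (ULift.up (yonedaEquiv g₂.hom))).down) :=
          (NatTrans.naturality_apply ud φ.left.op
            (ULift.up (yonedaEquiv g₂.hom) : ((Ufun B C).obj c.pt).obj (op g₂.left)))
        dsimp at h' ⊢
        have hg : c.pt.map φ.left.op (yonedaEquiv g₂.hom) = yonedaEquiv g₁.hom := by
          rw [yonedaEquiv_naturality, CostructuredArrow.w φ]
        replace h' := (congrArg (fun y => ud.app (op g₁.left)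
          (ULift.up y : ((Ufun B C).obj c.pt).obj (op g₁.left))) hg).symm.trans h'
        exact (congrArg ULift.down h').symm.trans (Category.comp_id _).symm }

end

lemma preservesColimits_of_isLeftKanExtension (F : B ⥤ C) [HasColimitsOfSize.{u, u} C]
    (L : (Bᵒᵖ ⥤ Type u) ⥤ C)
    (α : F ⟶ yoneda ⋙ L) [L.IsLeftKanExtension α] :
    PreservesColimitsOfSize.{u, u} L := by
  have h : ∀ (P : Bᵒᵖ ⥤ Type u),
      IsColimit ((Functor.LeftExtension.mk L α).coconeAt P) :=
    fun P => Functor.isPointwiseLeftKanExtensionOfIsLeftKanExtension L α P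
  constructor
  intro J _
  constructor
  intro D
  constructor
  intro c hc
  have hcU : IsColimit ((Ufun B C).mapCocone c) :=
    isColimitOfPreserves _ hc
  constructor
  refine IsColimit.mk
    (fun s => (h c.pt).desc (tcone F c s.pt (hcU.desc (scocone F L α s)))) ?_ ?_
  · -- fac
    intro s j
    apply (h (D.obj j)).hom_ext
    intro g
    have fac1 := (h c.pt).fac (tcone F c s.pt (hcU.desc (scocone F L α s)))
      (CostructuredArrow.mk (g.hom ≫ c.ι.app j))
    have fac2 := ConcreteCategory.congr_hom (congr_app (hcU.fac (scocone F L α s) j) (op g.left))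
      (ULift.up (yonedaEquiv g.hom) : ((D ⋙ Ufun B C).obj j).obj (op g.left))
    have fac1' : (α.app g.left ≫ L.map (g.hom ≫ c.ι.app j)) ≫
        (h c.pt).desc (tcone F c s.pt (hcU.desc (scocone F L α s))) =
        ULift.down ((hcU.desc (scocone F L α s)).app (op g.left)
          (ULift.up (yonedaEquiv (g.hom ≫ c.ι.app j)))) := fac1
    have fac2' : (hcU.desc (scocone F L α s)).app (op g.left)
        (ULift.up (yonedaEquiv (g.hom ≫ c.ι.app j))) =
        ULift.up (α.app g.left ≫ L.map (yonedaEquiv.symm (yonedaEquiv g.hom)) ≫ s.ι.app j) := fac2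
    have e : ∀ {Z : C} (d : L.obj c.pt ⟶ Z), (α.app g.left ≫ L.map g.hom) ≫ L.map (c.ι.app j) ≫ d =
        (α.app g.left ≫ L.map (g.hom ≫ c.ι.app j)) ≫ d := by
      intro Z d
      simp only [L.map_comp, Category.assoc]
    exact (e _).trans (fac1'.trans ((congrArg ULift.down fac2').trans
      (by rw [Equiv.symm_apply_apply]; exact (Category.assoc _ _ _).symm)))
  · -- uniq
    intro s m' hm'
    apply (h c.pt).hom_ext
    intro g
    have hu₂ : umor F L α c.pt s.pt m' = hcU.desc (scocone F L α s) := by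
      apply hcU.hom_ext
      intro j
      refine Eq.trans ?_ (hcU.fac (scocone F L α s) j).symm
      ext b x
      have hmj : L.map (c.ι.app j) ≫ m' = s.ι.app j := hm' j
      have hy : yonedaEquiv.symm ((c.ι.app j).app b x.down) =
          yonedaEquiv.symm x.down ≫ c.ι.app j := by
        apply yonedaEquiv.injective
        rw [yonedaEquiv_comp]
        simp
      have key : α.app b.unop ≫ L.map (yonedaEquiv.symm ((c.ι.app j).app b x.down)) ≫ m'
          = α.app b.unop ≫ L.map (yonedaEquiv.symm x.down) ≫ s.ι.app j := by
        rw [hy, L.map_comp, Category.assoc, hmj]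
      exact congrArg ULift.up key
    have fac1 := (h c.pt).fac (tcone F c s.pt (hcU.desc (scocone F L α s))) g
    refine Eq.trans ?_ fac1.symm
    rw [← hu₂]
    change _ = α.app g.left ≫ L.map (yonedaEquiv.symm (yonedaEquiv g.hom)) ≫ m'
    rw [Equiv.symm_apply_apply]
    rw [← Category.assoc]
    rfl

/-- The universe-generalized version of (the "if" direction of)
`Presheaf.isLeftKanExtension_along_yoneda_iff`. -/
lemma isLeftKanExtension_of_isIso_of_preserves [HasColimitsOfSize.{u, u} C]
    (G : B ⥤ C) (L : (Bᵒᵖ ⥤ Type u) ⥤ C) (α : G ⟶ yoneda ⋙ L) [IsIso α]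
    [PreservesColimitsOfSize.{u, u} L] : L.IsLeftKanExtension α := by
  apply Functor.LeftExtension.IsPointwiseLeftKanExtension.isLeftKanExtension
    (E := Functor.LeftExtension.mk _ α)
  intro P
  dsimp [Functor.LeftExtension.IsPointwiseLeftKanExtensionAt]
  apply IsColimit.ofWhiskerEquivalence (CategoryOfElements.costructuredArrowYonedaEquivalence _)
  let e : CategoryOfElements.toCostructuredArrow P ⋙ CostructuredArrow.proj yoneda P ⋙ G ≅
      Presheaf.functorToRepresentables P ⋙ L :=
    Functor.isoWhiskerLeft _ (Functor.isoWhiskerLeft _ (asIso α)) ≪≫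
      Functor.isoWhiskerLeft _ (Functor.associator _ _ _).symm ≪≫
      (Functor.associator _ _ _).symm ≪≫ Functor.isoWhiskerRight ((Functor.associator _ _ _).symm ≪≫
          Functor.isoWhiskerLeft _ uliftYonedaIsoYoneda.{0}.symm) L
  apply (IsColimit.precomposeHomEquiv e.symm _).1
  exact IsColimit.ofIsoColimit
    (isColimitOfPreserves L (Presheaf.colimitOfRepresentable P))
    (Cocones.ext (Iso.refl _) (fun j => by
        have key : e.hom.app j ≫ L.map (uliftYonedaEquiv.symm (unop j).2) =
            α.app (unop (unop j).1) ≫ L.map (yonedaEquiv.symm (unop j).2) := by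
          have h3 : uliftYonedaIsoYoneda.{0}.inv.app (unop (unop j).1) ≫
              uliftYonedaEquiv.{0}.symm (unop j).2 = yonedaEquiv.symm (unop j).2 := by
            ext Y f
            rfl
          have he : e.hom.app j = α.app (unop (unop j).1) ≫ 𝟙 _ ≫ 𝟙 _ ≫
              L.map (𝟙 _ ≫ uliftYonedaIsoYoneda.{0}.inv.app (unop (unop j).1)) := rfl
          rw [he, Category.id_comp, Category.id_comp, Category.id_comp]
          exact (Category.assoc _ _ _).trans
            (congrArg (α.app _ ≫ ·) ((L.map_comp _ _).symm.trans (congrArg L.map h3)))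
        exact (Category.comp_id _).trans ((Iso.inv_comp_eq (e.app j)).mpr key.symm).symm))

end Statement3Aux

theorem statement3 {A B : Type u} [SmallCategory A] [SmallCategory B]
    {C : Type w} [Category.{v} C] [HasColimitsOfSize.{u, u} C]
    (i : A ⥤ B) [i.Full] [i.Faithful] (F : B ⥤ C) :
    IsIso (Functor.whiskerLeft i (yoneda.leftKanExtensionUnit F) ≫
        (Functor.associator i yoneda (yoneda.leftKanExtension F)).inv ≫
        Functor.whiskerRight (Presheaf.compYonedaIsoYonedaCompLan i).hom (yoneda.leftKanExtension F) ≫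
        (Functor.associator yoneda i.op.lan (yoneda.leftKanExtension F)).hom) ∧
    IsIso ((yoneda.leftKanExtension (i ⋙ F)).descOfIsLeftKanExtension
        (yoneda.leftKanExtensionUnit (i ⋙ F)) (i.op.lan ⋙ yoneda.leftKanExtension F)
        (Functor.whiskerLeft i (yoneda.leftKanExtensionUnit F) ≫
          (Functor.associator i yoneda (yoneda.leftKanExtension F)).inv ≫
          Functor.whiskerRight (Presheaf.compYonedaIsoYonedaCompLan i).hom (yoneda.leftKanExtension F) ≫
          (Functor.associator yoneda i.op.lan (yoneda.leftKanExtension F)).hom)) := by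
  have h0 : IsIso (yoneda.leftKanExtensionUnit F) :=
    (Functor.isPointwiseLeftKanExtensionOfIsLeftKanExtension _
      (yoneda.leftKanExtensionUnit F)).isIso_hom
  have h1 : IsIso (Functor.whiskerLeft i (yoneda.leftKanExtensionUnit F) ≫
        (Functor.associator i yoneda (yoneda.leftKanExtension F)).inv ≫
        Functor.whiskerRight (Presheaf.compYonedaIsoYonedaCompLan i).hom (yoneda.leftKanExtension F) ≫
        (Functor.associator yoneda i.op.lan (yoneda.leftKanExtension F)).hom) := by
    infer_instance
  refine ⟨h1, ?_⟩
  have hpres : PreservesColimitsOfSize.{u, u} (yoneda.leftKanExtension F) :=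
    Statement3Aux.preservesColimits_of_isLeftKanExtension F _ (yoneda.leftKanExtensionUnit F)
  have hlan : PreservesColimitsOfSize.{u, u} i.op.lan :=
    (i.op.lanAdjunction (Type u)).leftAdjoint_preservesColimits
  have hL : PreservesColimitsOfSize.{u, u} (i.op.lan ⋙ yoneda.leftKanExtension F) :=
    comp_preservesColimits _ _
  have h2 : (i.op.lan ⋙ yoneda.leftKanExtension F).IsLeftKanExtension
      (Functor.whiskerLeft i (yoneda.leftKanExtensionUnit F) ≫
        (Functor.associator i yoneda (yoneda.leftKanExtension F)).inv ≫
        Functor.whiskerRight (Presheaf.compYonedaIsoYonedaCompLan i).hom (yoneda.leftKanExtension F) ≫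
        (Functor.associator yoneda i.op.lan (yoneda.leftKanExtension F)).hom) :=
    Statement3Aux.isLeftKanExtension_of_isIso_of_preserves _ _ _
  exact (Functor.isLeftKanExtension_iff_isIso _
    (yoneda.leftKanExtensionUnit (i ⋙ F)) _
    (Functor.descOfIsLeftKanExtension_fac _ _ _ _)).mp h2
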